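/- Let S be a ℤ/2ℤ-graded polynomial ring k[x] with deg(x) = 1̄ (the grading given by γ: ℤ → ℤ/2ℤ, 1 ↦ 1̄). Then the element 1 ∈ S is relevant, the degree-zero part S_{(x)} of the localization equals k[x²], and Proj^{ℤ/2ℤ}(S) ≅ Spec(k[x²]) ≅ 𝔸¹_k is affine. -/

import Mathlib

set_option maxHeartbeats 1000000


/-- The `ℤ/2ℤ`-grading of `k[x]` given by `deg x = 1̄`: a polynomial is homogeneous of
degree `d` if all its monomials `x^n` satisfy `n̄ = d`. -/
def Hdeg {k : Type*} [Field k] (p : Polynomial k) (d : ZMod 2) : Prop :=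
  ∀ n : ℕ, p.coeff n ≠ 0 → (n : ZMod 2) = d

/-- Homogeneity of degree `d` for an element of the localization `S_f`
(`f` homogeneous of degree `e`). -/
def HomogLoc9 {k : Type*} [Field k] (f : Polynomial k) (e : ZMod 2)
    (x : Localization.Away f) (d : ZMod 2) : Prop :=
  ∃ (s : Polynomial k) (n : ℕ) (m : ZMod 2), Hdeg s m ∧
    x * algebraMap (Polynomial k) (Localization.Away f) (f ^ n) =
      algebraMap (Polynomial k) (Localization.Away f) s ∧
    d + n • e = m

/-- Relevance for the `ℤ/2ℤ`-graded ring `k[x]`. -/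
def Rel9 {k : Type*} [Field k] (f : Polynomial k) (e : ZMod 2) : Prop :=
  (AddSubgroup.closure {d : ZMod 2 | ∃ u : (Localization.Away f)ˣ,
      HomogLoc9 f e (u : Localization.Away f) d}).FiniteIndex

/-- The subalgebra of polynomials supported in even degrees. -/
def evenSub (k : Type*) [Field k] : Subalgebra k (Polynomial k) where
  carrier := {p | ∀ n : ℕ, p.coeff n ≠ 0 → Even n}
  mul_mem' := by
    intro p q hp hq n hn
    rw [Polynomial.coeff_mul] at hn
    obtain ⟨x, hx, hx0⟩ := Finset.exists_ne_zero_of_sum_ne_zero hn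
    have h1 : p.coeff x.1 ≠ 0 := fun h => hx0 (by simp [h])
    have h2 : q.coeff x.2 ≠ 0 := fun h => hx0 (by simp [h])
    have := Finset.HasAntidiagonal.mem_antidiagonal.mp hx
    rw [← this]
    exact (hp _ h1).add (hq _ h2)
  add_mem' := by
    intro p q hp hq n hn
    rw [Polynomial.coeff_add] at hn
    by_cases h : p.coeff n = 0
    · exact hq n (fun h' => hn (by simp [h, h']))
    · exact hp n h
  algebraMap_mem' := by
    intro r n hn
    have : (Polynomial.C r).coeff n ≠ 0 := hn
    rw [Polynomial.coeff_C] at this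
    by_cases h : n = 0
    · simp [h]
    · simp [h] at this

lemma hdeg_iff_even {k : Type*} [Field k] (p : Polynomial k) :
    Hdeg p 0 ↔ ∀ n : ℕ, p.coeff n ≠ 0 → Even n := by
  unfold Hdeg
  constructor <;> intro h n hn
  · have := h n hn
    rw [ZMod.natCast_eq_zero_iff] at this
    exact (even_iff_two_dvd).mpr this
  · rw [ZMod.natCast_eq_zero_iff]
    exact (even_iff_two_dvd).mp (h n hn)

theorem zmod2_graded_polynomial_proj_affine (k : Type*) [Field k] :
    Rel9 (1 : Polynomial k) 0 ∧
    {p : Polynomial k | Hdeg p 0} =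
      (Algebra.adjoin k {(Polynomial.X : Polynomial k) ^ 2} : Subalgebra k (Polynomial k)) ∧
    Nonempty (Polynomial k ≃ₐ[k]
      Algebra.adjoin k {(Polynomial.X : Polynomial k) ^ 2}) := by
  have hadj : (Algebra.adjoin k {(Polynomial.X : Polynomial k) ^ 2}) = evenSub k := by
    apply le_antisymm
    · rw [Algebra.adjoin_le_iff]
      rintro _ rfl
      intro n hn
      rw [Polynomial.coeff_X_pow] at hn
      by_cases h : n = 2
      · exact h ▸ even_two
      · simp [h] at hn
    · intro p hp
      rw [Polynomial.as_sum_support_C_mul_X_pow p]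
      apply Subalgebra.sum_mem
      intro i hi
      obtain ⟨m, hm⟩ := hp i (Polynomial.mem_support_iff.mp hi)
      apply Subalgebra.mul_mem
      · exact Subalgebra.algebraMap_mem _ _
      · have : (Polynomial.X : Polynomial k) ^ i = (Polynomial.X ^ 2) ^ m := by
          rw [← pow_mul, hm, two_mul]
        rw [this]
        have hx : (Polynomial.X : Polynomial k) ^ 2 ∈
            Algebra.adjoin k {(Polynomial.X : Polynomial k) ^ 2} :=
          Algebra.subset_adjoin rfl
        exact pow_mem hx m
  refine ⟨?_, ?_, ?_⟩
  · unfold Rel9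
    exact ⟨AddSubgroup.index_ne_zero_of_finite⟩
  · ext p
    rw [hadj]
    exact hdeg_iff_even p
  · have hinj : Function.Injective
        (Polynomial.aeval ((Polynomial.X : Polynomial k) ^ 2) :
          Polynomial k →ₐ[k] Polynomial k) := by
      intro p q hpq
      have h : ∀ r : Polynomial k,
          Polynomial.aeval ((Polynomial.X : Polynomial k) ^ 2) r =
            r.comp (Polynomial.X ^ 2) := by
        intro r
        rw [Polynomial.aeval_def, Polynomial.comp]
        rfl
      have : (p - q).comp (Polynomial.X ^ 2) = 0 := by
        rw [Polynomial.sub_comp, ← h, ← h, hpq, sub_self]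
      rw [Polynomial.comp_eq_zero_iff] at this
      rcases this with h0 | ⟨_, hC⟩
      · exact sub_eq_zero.mp h0
      · exfalso
        have := congrArg Polynomial.natDegree hC
        simp [Polynomial.natDegree_X_pow] at this
    exact ⟨(AlgEquiv.ofInjective _ hinj).trans
      (Subalgebra.equivOfEq _ _ (Algebra.adjoin_singleton_eq_range_aeval k _).symm)⟩
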